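/- The function d(s) = 4(1-s)s/((1+s)(3s+1)) on the interval [0,1] attains its maximum value 6 - 4√2 at s = (2√2 - 1)/7. -/
import Mathlib

theorem stmt_5 :
    IsMaxOn (fun s : ℝ => 4*(1-s)*s/((1+s)*(3*s+1))) (Set.Icc 0 1) ((2*Real.sqrt 2 - 1)/7) ∧
    (2*Real.sqrt 2 - 1)/7 ∈ Set.Icc (0:ℝ) 1 ∧
    4*(1-(2*Real.sqrt 2 - 1)/7)*((2*Real.sqrt 2 - 1)/7) /
      ((1+(2*Real.sqrt 2 - 1)/7)*(3*((2*Real.sqrt 2 - 1)/7)+1)) = 6 - 4*Real.sqrt 2 := by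
  have hr2 : Real.sqrt 2 ^ 2 = 2 := Real.sq_sqrt (by norm_num)
  have hr1 : (1:ℝ) ≤ Real.sqrt 2 := by
    nlinarith [Real.sqrt_nonneg 2, hr2]
  have hr15 : Real.sqrt 2 ≤ 1.5 := by
    nlinarith [Real.sqrt_nonneg 2, hr2]
  set r := Real.sqrt 2 with hr
  have hval : 4*(1-(2*r - 1)/7)*((2*r - 1)/7) /
      ((1+(2*r - 1)/7)*(3*((2*r - 1)/7)+1)) = 6 - 4*r := by
    have hd : (1+(2*r - 1)/7)*(3*((2*r - 1)/7)+1) ≠ 0 := by nlinarith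
    rw [div_eq_iff hd]
    nlinarith [hr2]
  refine ⟨?_, ?_, hval⟩
  · intro x hx
    simp only [Set.mem_Icc] at hx
    simp only [Set.mem_setOf_eq, hval]
    rw [div_le_iff₀ (by nlinarith)]
    nlinarith [sq_nonneg (7*x - (2*r-1)), hr2, hx.1, hx.2]
  · constructor <;> [nlinarith; nlinarith]
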